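/- Let p be a prime, let n ≤ p, let q be a prime power such that p divides q − 1, and let R ≤ GL(n, q) be the group of all diagonal matrices diag(x_1, ..., x_n) where each x_i lies in the p-part (unique Sylow p-subgroup) of the multiplicative group F_q^×. If A ∈ GL(n, q) normalizes R, then A is a monomial matrix, i.e., A has exactly one non-zero entry in each row and exactly one non-zero entry in each column. -/
import Mathlib


/-- `M` is a diagonal matrix all of whose diagonal entries have `p`-power order in `F^×`,
i.e. `M ∈ R = {diag(x_1, …, x_n) | x_i in the p-part of F_q^×}`. -/
def IsDiagWithPPowerOrderEntries (p : ℕ) {n : ℕ} {F : Type*} [Field F]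
    (M : Matrix (Fin n) (Fin n) F) : Prop :=
  (∀ i j : Fin n, i ≠ j → M i j = 0) ∧ (∀ i : Fin n, ∃ k : ℕ, (M i i) ^ p ^ k = 1)

/-- let `p` be a prime, `n ≤ p`, and `F` the field with `q` elements where
`p ∣ q - 1`.  If `A ∈ GL(n, q)` normalizes the group `R` of diagonal matrices with entries
in the Sylow `p`-subgroup of `F^×`, then `A` is monomial: it has exactly one nonzero entry
in each row and in each column. -/
theorem normalizer_of_diagonal_p_torus_is_monomial
    (p : ℕ) (hp : p.Prime) (n : ℕ) (hn : n ≤ p)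
    (F : Type*) [Field F] [Fintype F] (q : ℕ) (hq : Fintype.card F = q)
    (hpq : p ∣ q - 1)
    (A : Matrix.GeneralLinearGroup (Fin n) F)
    (hA : ∀ M : Matrix (Fin n) (Fin n) F, IsUnit M →
      IsDiagWithPPowerOrderEntries p M →
      IsDiagWithPPowerOrderEntries p ((A : Matrix (Fin n) (Fin n) F) * M *
        ((A⁻¹ : Matrix.GeneralLinearGroup (Fin n) F) : Matrix (Fin n) (Fin n) F))) :
    (∀ i : Fin n, ∃! j : Fin n, (A : Matrix (Fin n) (Fin n) F) i j ≠ 0) ∧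
    (∀ j : Fin n, ∃! i : Fin n, (A : Matrix (Fin n) (Fin n) F) i j ≠ 0) := by
  classical
  haveI : Fact p.Prime := ⟨hp⟩
  obtain ⟨ζ, hζ⟩ : ∃ g : Fˣ, orderOf g = p := by
    apply exists_prime_orderOf_dvd_card p
    rw [Fintype.card_units, hq]; exact hpq
  set z : F := (ζ : F) with hz
  have hz0 : z ≠ 0 := ζ.ne_zero
  have hz1 : z ≠ 1 := by
    intro h
    have : ζ = 1 := Units.ext h
    rw [this, orderOf_one] at hζ
    exact hp.ne_one hζ.symm
  have hzp : z ^ p = 1 := by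
    have h := pow_orderOf_eq_one ζ
    rw [hζ] at h
    have h2 := congrArg (Units.val) h
    simpa [Units.val_pow_eq_pow_val] using h2
  set Am : Matrix (Fin n) (Fin n) F := (A : Matrix (Fin n) (Fin n) F) with hAm
  have hinv : ((A⁻¹ : Matrix.GeneralLinearGroup (Fin n) F) : Matrix (Fin n) (Fin n) F) * Am = 1 := A.inv_mul
  have hinv2 : Am * ((A⁻¹ : Matrix.GeneralLinearGroup (Fin n) F) : Matrix (Fin n) (Fin n) F) = 1 := A.mul_inv
  -- row existence
  have rowex : ∀ i : Fin n, ∃ j, Am i j ≠ 0 := by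
    intro i
    by_contra h
    push_neg at h
    have h2 : (Am * ((A⁻¹ : Matrix.GeneralLinearGroup (Fin n) F) : Matrix (Fin n) (Fin n) F)) i i
        = (1 : Matrix (Fin n) (Fin n) F) i i := by rw [hinv2]
    rw [Matrix.mul_apply] at h2
    simp [h] at h2
  have colex : ∀ j : Fin n, ∃ i, Am i j ≠ 0 := by
    intro j
    by_contra h
    push_neg at h
    have h2 : (((A⁻¹ : Matrix.GeneralLinearGroup (Fin n) F) : Matrix (Fin n) (Fin n) F) * Am) j j
        = (1 : Matrix (Fin n) (Fin n) F) j j := by rw [hinv]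
    rw [Matrix.mul_apply] at h2
    simp [h] at h2
  -- row uniqueness
  have key : ∀ (i j0 j1 : Fin n), Am i j0 ≠ 0 → Am i j1 ≠ 0 → j0 = j1 := by
    intro i j0 j1 h0 h1
    by_contra hne
    set d : Fin n → F := fun k => if k = j0 then z else 1 with hd
    set D : Matrix (Fin n) (Fin n) F := Matrix.diagonal d with hD
    have hDunit : IsUnit D := by
      rw [Matrix.isUnit_iff_isUnit_det, Matrix.det_diagonal, isUnit_iff_ne_zero]
      rw [Finset.prod_ne_zero_iff]
      intro k _
      by_cases hk : k = j0 <;> simp [hd, hk, hz0]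
    have hDdiag : IsDiagWithPPowerOrderEntries p D := by
      constructor
      · intro a b hab; exact Matrix.diagonal_apply_ne d hab
      · intro k
        by_cases hk : k = j0
        · exact ⟨1, by simp [hD, Matrix.diagonal_apply_eq, hd, hk, hzp]⟩
        · exact ⟨0, by simp [hD, Matrix.diagonal_apply_eq, hd, hk]⟩
    obtain ⟨hEoff, -⟩ := hA D hDunit hDdiag
    set E : Matrix (Fin n) (Fin n) F :=
      Am * D * ((A⁻¹ : Matrix.GeneralLinearGroup (Fin n) F) : Matrix (Fin n) (Fin n) F) with hE
    have hEA : E * Am = Am * D := by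
      rw [hE, Matrix.mul_assoc, hinv, Matrix.mul_one]
    have hrow : ∀ k, E i i * Am i k = Am i k * d k := by
      intro k
      have h1 : (E * Am) i k = ∑ m, E i m * Am m k := Matrix.mul_apply
      have h2 : ∑ m, E i m * Am m k = E i i * Am i k := by
        apply Finset.sum_eq_single i
        · intro m _ hm
          rw [hEoff i m (Ne.symm hm), zero_mul]
        · intro h; exact absurd (Finset.mem_univ i) h
      have h3 : (Am * D) i k = Am i k * d k := Matrix.mul_diagonal d Am i k
      rw [← h2, ← h1, hEA, h3]
    have e0 : E i i = z := by
      have := hrow j0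
      simp only [hd, if_pos rfl] at this
      rw [mul_comm (Am i j0) z] at this
      exact mul_right_cancel₀ h0 this
    have e1 : E i i = 1 := by
      have h := hrow j1
      simp only [hd, if_neg (Ne.symm hne), mul_one] at h
      exact mul_right_cancel₀ h1 (h.trans (one_mul (Am i j1)).symm)
    exact hz1 (e0.symm.trans e1)
  -- assemble
  have rowuniq : ∀ i : Fin n, ∃! j : Fin n, Am i j ≠ 0 := by
    intro i
    obtain ⟨j, hj⟩ := rowex i
    exact ⟨j, hj, fun j' hj' => key i j' j hj' hj⟩
  refine ⟨rowuniq, ?_⟩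
  -- the function picking nonzero column of each row
  set f : Fin n → Fin n := fun i => (rowuniq i).choose with hf
  have hfspec : ∀ i, Am i (f i) ≠ 0 := fun i => (rowuniq i).choose_spec.1
  have hfuniq : ∀ i j, Am i j ≠ 0 → f i = j := fun i j h =>
    ((rowuniq i).choose_spec.2 j h).symm
  have hfsurj : Function.Surjective f := by
    intro j
    obtain ⟨i, hi⟩ := colex j
    exact ⟨i, hfuniq i j hi⟩
  have hfinj : Function.Injective f := Finite.injective_iff_surjective.mpr hfsurj
  intro j
  obtain ⟨i, hi⟩ := colex j
  refine ⟨i, hi, fun i' hi' => ?_⟩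
  exact hfinj ((hfuniq i' j hi').trans (hfuniq i j hi).symm)
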